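/- Uniqueness of the coder: fix a real q > 0 and let κ : (0,1] → ℝ be continuously differentiable on (0,1] with κ(1) = 0 and κ'(1) = −1. Suppose that for every finite index set A and all probability vectors x = (x_i)_{i∈A} and y = (y_i)_{i∈A} with x_i > 0 and y_i > 0 for all i ∈ A, one has ∑_{i∈A} π_q(x_i, y_i) κ(y_i) ≥ ∑_{i∈A} x_i κ(x_i). Then κ(y) = ln_q(1/y) for every y ∈ (0,1]. -/

import Mathlib

/-- The `q`-logarithm: `ln_q x = ln x` if `q = 1`, else `(x^(1−q) − 1)/(1−q)`. -/
noncomputable def qlog (q x : ℝ) : ℝ :=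
  if q = 1 then Real.log x else (x ^ (1 - q) - 1) / (1 - q)

/-- The interaction `π_q(x,y) = q·x + (1−q)·y`. -/
def inter (q x y : ℝ) : ℝ := q * x + (1 - q) * y

open Set Filter Topology

/-- Uniqueness of the coder. For `q > 0`, any `κ` continuously
differentiable on `(0,1]` with `κ 1 = 0`, `κ' 1 = −1`, satisfying the
variational inequality for all strictly positive probability vectors, must be
`κ y = ln_q (1/y)` on `(0,1]`. -/
theorem stmt_13 (q : ℝ) (hq : 0 < q) (κ κ' : ℝ → ℝ)
    (hderiv : ∀ y ∈ Set.Ioc (0:ℝ) 1, HasDerivWithinAt κ (κ' y) (Set.Ioc (0:ℝ) 1) y)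
    (hcont : ContinuousOn κ' (Set.Ioc (0:ℝ) 1))
    (hκ1 : κ 1 = 0) (hκ'1 : κ' 1 = -1)
    (hvar : ∀ (n : ℕ) (x y : Fin n → ℝ),
      (∀ i, 0 < x i) → (∑ i, x i = 1) →
      (∀ i, 0 < y i) → (∑ i, y i = 1) →
      ∑ i, x i * κ (x i) ≤ ∑ i, inter q (x i) (y i) * κ (y i)) :
    ∀ y ∈ Set.Ioc (0:ℝ) 1, κ y = qlog q (1 / y) := by
  -- κ is differentiable (in the usual sense) at interior points
  have hDA : ∀ t ∈ Set.Ioo (0:ℝ) 1, HasDerivAt κ (κ' t) t := by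
    intro t ht
    exact (hderiv t ⟨ht.1, ht.2.le⟩).hasDerivAt
      (mem_nhds_iff.mpr ⟨Set.Ioo 0 1, fun s hs => ⟨hs.1, hs.2.le⟩, isOpen_Ioo, ht⟩)
  set g : ℝ → ℝ := fun t => (1 - q) * κ t + t * κ' t with hg
  -- pairwise equality of g from the variational principle
  have gpair : ∀ a b c : ℝ, 0 < a → 0 < b → 0 < c → a + b + c = 1 → g a = g b := by
    intro a b c ha hb hc habc
    have ha1 : a < 1 := by linarith
    have hb1 : b < 1 := by linarith
    set φ : ℝ → ℝ := fun t =>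
      (q * a + (1 - q) * (a + t)) * κ (a + t) +
        ((q * b + (1 - q) * (b - t)) * κ (b - t) + (q * c + (1 - q) * c) * κ c) with hφ
    have hmin : IsLocalMin φ 0 := by
      have hmem : Set.Ioo (-a) b ∈ 𝓝 (0:ℝ) := Ioo_mem_nhds (neg_lt_zero.mpr ha) hb
      refine Filter.eventually_of_mem hmem ?_
      intro t ht
      have hta : -a < t := ht.1
      have htb : t < b := ht.2
      have h := hvar 3 ![a, b, c] ![a + t, b - t, c]
        (by intro i; fin_cases i <;> simp [ha, hb, hc])
        (by simp [Fin.sum_univ_three]; linarith)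
        (by intro i
            fin_cases i
            · simpa using by linarith
            · simpa using by linarith
            · simpa using hc)
        (by simp [Fin.sum_univ_three]; linarith)
      simp only [Fin.sum_univ_three, Matrix.cons_val_zero, Matrix.cons_val_one,
        Matrix.head_cons, Matrix.cons_val_two, Matrix.tail_cons, inter] at h
      have h0 : φ 0 = a * κ a + b * κ b + c * κ c := by
        simp only [hφ, add_zero, sub_zero]; ring
      rw [h0]
      simp only [hφ]
      ring_nf at h ⊢
      linarith
    have hda : HasDerivAt (fun t : ℝ => κ (a + t)) (κ' a) 0 := by
      have h1 : HasDerivAt (fun t : ℝ => a + t) 1 0 := (hasDerivAt_id 0).const_add a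
      have h2 : HasDerivAt κ (κ' a) ((fun t : ℝ => a + t) 0) := by
        simpa using hDA a ⟨ha, ha1⟩
      simpa [Function.comp_def] using h2.comp 0 h1
    have hdb : HasDerivAt (fun t : ℝ => κ (b - t)) (-κ' b) 0 := by
      have h1 : HasDerivAt (fun t : ℝ => b - t) (-1) 0 := by
        simpa using ((hasDerivAt_id (0:ℝ)).const_sub b)
      have h2 : HasDerivAt κ (κ' b) ((fun t : ℝ => b - t) 0) := by
        simpa using hDA b ⟨hb, hb1⟩
      simpa [Function.comp_def] using h2.comp 0 h1
    have hla : HasDerivAt (fun t : ℝ => q * a + (1 - q) * (a + t)) (1 - q) 0 := by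
      have : HasDerivAt (fun t : ℝ => a + t) 1 0 := (hasDerivAt_id 0).const_add a
      simpa using (this.const_mul (1 - q)).const_add (q * a)
    have hlb : HasDerivAt (fun t : ℝ => q * b + (1 - q) * (b - t)) (-(1 - q)) 0 := by
      have : HasDerivAt (fun t : ℝ => b - t) (-1) 0 := by
        simpa using ((hasDerivAt_id (0:ℝ)).const_sub b)
      simpa using (this.const_mul (1 - q)).const_add (q * b)
    have hφd : HasDerivAt φ (g a - g b) 0 := by
      have h1 := hla.mul hda
      have h2 := hlb.mul hdb
      have h3 := (h1.add (h2.add_const ((q * c + (1 - q) * c) * κ c)))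
      convert h3 using 1
      · rfl
      · rfl
      · rfl
      simp only [add_zero, sub_zero, hg]
      ring
    have := hmin.hasDerivAt_eq_zero hφd
    linarith [this]
  -- g is constant on Ioo 0 1
  have gconst : ∀ a ∈ Set.Ioo (0:ℝ) 1, ∀ b ∈ Set.Ioo (0:ℝ) 1, g a = g b := by
    intro a ha b hb
    set c := min (1 - a) (1 - b) / 2 with hcdef
    have hc : 0 < c :=
      div_pos (lt_min (by linarith [ha.2]) (by linarith [hb.2])) two_pos
    have hca : c < 1 - a := by
      have h1 : c ≤ (1 - a) / 2 := by
        simp only [hcdef]; gcongr; exact min_le_left _ _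
      linarith [ha.2]
    have hcb : c < 1 - b := by
      have h1 : c ≤ (1 - b) / 2 := by
        simp only [hcdef]; gcongr; exact min_le_right _ _
      linarith [hb.2]
    have h1 : g a = g c := gpair a c (1 - a - c) ha.1 hc (by linarith) (by ring)
    have h2 : g b = g c := gpair b c (1 - b - c) hb.1 hc (by linarith) (by ring)
    rw [h1, h2]
  -- value of the constant: continuity at 1
  have gval : ∀ a ∈ Set.Ioo (0:ℝ) 1, g a = -1 := by
    intro a ha
    have hco : ContinuousWithinAt g (Set.Ioc 0 1) 1 := by
      have hκc : ContinuousWithinAt κ (Set.Ioc 0 1) 1 :=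
        (hderiv 1 ⟨one_pos, le_refl 1⟩).continuousWithinAt
      have hκ'c : ContinuousWithinAt κ' (Set.Ioc 0 1) 1 := hcont 1 ⟨one_pos, le_refl 1⟩
      exact (continuousWithinAt_const.mul hκc).add
        (continuousWithinAt_id.mul hκ'c)
    have hT1 : Filter.Tendsto g (𝓝[Set.Ioo (0:ℝ) 1] 1) (𝓝 (g 1)) :=
      hco.tendsto.mono_left (nhdsWithin_mono 1 Set.Ioo_subset_Ioc_self)
    have hEq : g =ᶠ[𝓝[Set.Ioo (0:ℝ) 1] 1] fun _ => g a := by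
      filter_upwards [self_mem_nhdsWithin] with t ht
      exact gconst t ht a ha
    have hT2 : Filter.Tendsto g (𝓝[Set.Ioo (0:ℝ) 1] 1) (𝓝 (g a)) := by
      rw [Filter.tendsto_congr' hEq]; exact tendsto_const_nhds
    have hne : (𝓝[Set.Ioo (0:ℝ) 1] (1:ℝ)).NeBot := right_nhdsWithin_Ioo_neBot one_pos
    have : g a = g 1 := tendsto_nhds_unique hT2 hT1
    rw [this]; simp [hg, hκ1, hκ'1]
  have gIoc : ∀ t ∈ Set.Ioc (0:ℝ) 1, (1 - q) * κ t + t * κ' t = -1 := by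
    intro t ht
    rcases eq_or_lt_of_le ht.2 with h1 | h1
    · rw [h1]; simp [hκ1, hκ'1]
    · exact gval t ⟨ht.1, h1⟩
  -- the target function and its ODE
  have hql : ∀ t : ℝ, 0 < t → q ≠ 1 → qlog q (1 / t) = (t ^ (q - 1) - 1) / (1 - q) := by
    intro t ht hq1
    have h : t⁻¹ ^ (1 - q) = t ^ (q - 1) := by
      rw [← Real.rpow_neg_one t, ← Real.rpow_mul ht.le]
      congr 1; ring
    rw [qlog, if_neg hq1, one_div, h]
  have hψ : ∀ t : ℝ, 0 < t → HasDerivAt (fun s => qlog q (1 / s)) (-(t ^ (q - 2))) t := by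
    intro t ht
    by_cases hq1 : q = 1
    · subst hq1
      have : (fun s : ℝ => qlog 1 (1 / s)) = fun s => -Real.log s := by
        funext s; rw [qlog, if_pos rfl, one_div, Real.log_inv]
      rw [this]
      have := (Real.hasDerivAt_log ht.ne').neg
      convert this using 1
      · rfl
      · rfl
      · rfl
      rw [show (1:ℝ) - 2 = -1 by norm_num, Real.rpow_neg_one]
    · have heq : (fun s : ℝ => qlog q (1 / s)) =ᶠ[𝓝 t]
          fun s => (s ^ (q - 1) - 1) / (1 - q) := by
        filter_upwards [isOpen_Ioi.mem_nhds (Set.mem_Ioi.mpr ht)] with s hs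
        exact hql s hs hq1
      have hd : HasDerivAt (fun s : ℝ => (s ^ (q - 1) - 1) / (1 - q))
          (-(t ^ (q - 2))) t := by
        have := ((Real.hasDerivAt_rpow_const (p := q - 1) (Or.inl ht.ne')).sub_const 1).div_const
          (1 - q)
        convert this using 1
        · rfl
        · rfl
        rw [show q - 1 - 1 = q - 2 by ring]
        field_simp [sub_ne_zero.mpr (Ne.symm hq1)]
        ring
      exact hd.congr_of_eventuallyEq heq
  have hψode : ∀ t : ℝ, 0 < t →
      (1 - q) * qlog q (1 / t) + t * (-(t ^ (q - 2))) = -1 := by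
    intro t ht
    have htt : t * t ^ (q - 2) = t ^ (q - 1) := by
      nth_rewrite 1 [← Real.rpow_one t]
      rw [← Real.rpow_add ht]
      congr 1; ring
    by_cases hq1 : q = 1
    · subst hq1
      rw [qlog, if_pos rfl]
      simp only [sub_self, zero_mul, zero_add]
      rw [show (1:ℝ) - 2 = -1 by norm_num, Real.rpow_neg_one, mul_neg,
        mul_inv_cancel₀ ht.ne']
    · rw [hql t ht hq1]
      have hq1' : (1:ℝ) - q ≠ 0 := sub_ne_zero.mpr (Ne.symm hq1)
      field_simp
      linear_combination -htt
  -- the product u is constant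
  set u : ℝ → ℝ := fun t => t ^ (1 - q) * (κ t - qlog q (1 / t)) with hu
  have hud : ∀ t ∈ Set.Ioc (0:ℝ) 1, HasDerivWithinAt u 0 (Set.Ioc 0 1) t := by
    intro t ht
    have hrp : HasDerivAt (fun s : ℝ => s ^ (1 - q)) ((1 - q) * t ^ (1 - q - 1)) t :=
      Real.hasDerivAt_rpow_const (Or.inl ht.1.ne')
    have hsub : HasDerivWithinAt (fun s => κ s - qlog q (1 / s))
        (κ' t - -(t ^ (q - 2))) (Set.Ioc 0 1) t :=
      (hderiv t ht).sub (hψ t ht.1).hasDerivWithinAt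
    have := hrp.hasDerivWithinAt.mul hsub
    convert this using 1
    · rfl
    · rfl
    · rfl
    have h1 : t ^ (1 - q) = t * t ^ (-q) := by
      rw [show (1:ℝ) - q = 1 + -q by ring, Real.rpow_add ht.1, Real.rpow_one]
    have h2 : t ^ (1 - q - 1) = t ^ (-q) := by norm_num
    rw [h1, h2]
    linear_combination (t ^ (-q : ℝ)) * (hψode t ht.1) - (t ^ (-q : ℝ)) * (gIoc t ht)
  have hconst : ∀ t ∈ Set.Ioc (0:ℝ) 1, u t = u 1 := by
    intro t ht
    have hsub : Set.Icc t 1 ⊆ Set.Ioc 0 1 := fun s hs => ⟨lt_of_lt_of_le ht.1 hs.1, hs.2⟩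
    have hcu : ContinuousOn u (Set.Icc t 1) := by
      intro s hs
      exact ((hud s (hsub hs)).continuousWithinAt).mono hsub
    have hdu : ∀ s ∈ Set.Ico t 1, HasDerivWithinAt u 0 (Set.Ici s) s := by
      intro s hs
      have hs' : s ∈ Set.Ioc (0:ℝ) 1 := ⟨lt_of_lt_of_le ht.1 hs.1, hs.2.le⟩
      refine (hud s hs').mono_of_mem_nhdsWithin ?_
      rw [mem_nhdsWithin]
      exact ⟨Set.Ioo 0 1, isOpen_Ioo, ⟨hs'.1, hs.2⟩,
        fun z hz => ⟨hz.1.1, hz.1.2.le⟩⟩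
    have := constant_of_has_deriv_right_zero hcu hdu 1 ⟨ht.2, le_refl 1⟩
    rw [this]
  have hu1 : u 1 = 0 := by
    have hq0 : qlog q 1 = 0 := by
      rw [qlog]; split
      · exact Real.log_one
      · simp
    simp [hu, hκ1, hq0]
  intro y hy
  have h0 := hconst y hy
  rw [hu1] at h0
  simp only [hu] at h0
  have hpos : (0:ℝ) < y ^ (1 - q) := Real.rpow_pos_of_pos hy.1 _
  have := mul_eq_zero.mp h0
  rcases this with h | h
  · exact absurd h hpos.ne'
  · linarith [sub_eq_zero.mp h]
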